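/- Let (A,φ) with operators T_i, T_i^*, T_i′ satisfy conditions (C1)–(C4). Then for every odd r ≥ 1 and every ε ∈ {1,*,′}^r, lim_{N→∞} φ(S_N^{ε(1)} ⋯ S_N^{ε(r)}) = 0. -/

import Mathlib

open Filter
open scoped BigOperators Classical

/-- The three kinds of labels `1, ∗, ′` for the operators. -/
inductive Eps : Type
  | one
  | star
  | prime
  deriving DecidableEq

/-- `Teps T T' ε i` is the operator `T_i^ε`. -/
def Teps {A : Type*} [Ring A] [StarRing A] (T T' : ℕ → A) : Eps → ℕ → A
  | Eps.one, i => T i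
  | Eps.star, i => star (T i)
  | Eps.prime, i => T' i

/-- The ordered product `T_{i(1)}^{ε(1)} ⋯ T_{i(r)}^{ε(r)}`. -/
def prodT {A : Type*} [Ring A] [StarRing A] (T T' : ℕ → A) {r : ℕ}
    (ε : Fin r → Eps) (i : Fin r → ℕ) : A :=
  (List.ofFn fun j => Teps T T' (ε j) (i j)).prod

/-- `ker i = π` for a set partition `π` of `[r]`, encoded as a setoid on `Fin r`. -/
def kerEq {r : ℕ} (i : Fin r → ℕ) (π : Setoid (Fin r)) : Prop :=
  ∀ k l, i k = i l ↔ π.r k l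

/-- Condition (C1): vanishing means and vanishing of all second mixed moments except
`φ(T_i^* T_i)` and `φ(T_i^* T_i′)`. -/
def C1 {A : Type*} [Ring A] [Algebra ℂ A] [StarRing A]
    (φ : A →ₗ[ℂ] ℂ) (T T' : ℕ → A) : Prop :=
  (∀ (i : ℕ) (e : Eps), φ (Teps T T' e i) = 0) ∧
  (∀ (i : ℕ) (e e' : Eps), ¬ (e = Eps.star ∧ (e' = Eps.one ∨ e' = Eps.prime)) →
    φ (Teps T T' e i * Teps T T' e' i) = 0)

/-- Condition (C2): uniform bounds for moments with a fixed kernel. -/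
def C2 {A : Type*} [Ring A] [Algebra ℂ A] [StarRing A]
    (φ : A →ₗ[ℂ] ℂ) (T T' : ℕ → A) : Prop :=
  ∀ (r : ℕ) (π : Setoid (Fin r)), ∃ ρ : ℝ, 0 ≤ ρ ∧
    ∀ (ε : Fin r → Eps) (i : Fin r → ℕ), kerEq i π →
      ‖φ (prodT T T' ε i)‖ ≤ ρ

/-- Condition (C3): the state factors over interval partitions.  A word whose kernel is an
interval partition is presented as a concatenation of groups, each group having a constant
index, different groups having distinct indices. -/
def C3 {A : Type*} [Ring A] [Algebra ℂ A] [StarRing A]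
    (φ : A →ₗ[ℂ] ℂ) (T T' : ℕ → A) : Prop :=
  ∀ G : List (List (Eps × ℕ)),
    (∀ g ∈ G, g ≠ [] ∧ ∃ m, ∀ x ∈ g, Prod.snd x = m) →
    (G.Pairwise fun g₁ g₂ => ∀ x₁ ∈ g₁, ∀ x₂ ∈ g₂, Prod.snd x₁ ≠ Prod.snd x₂) →
    φ ((G.flatten.map fun x => Teps T T' x.1 x.2).prod) =
      (G.map fun g => φ ((g.map fun x => Teps T T' x.1 x.2).prod)).prod

/-- Condition (C4): commutation relations `T_i^ε T_j^{ε'} = Q_{ε,ε'}(i,j) T_j^{ε'} T_i^ε`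
for `i ≠ j`. -/
def C4 {A : Type*} [Ring A] [Algebra ℂ A] [StarRing A]
    (T T' : ℕ → A) (Q : Eps → Eps → ℕ → ℕ → ℝ) : Prop :=
  ∀ (i j : ℕ), i ≠ j → ∀ (e e' : Eps),
    Teps T T' e i * Teps T T' e' j = (Q e e' i j : ℂ) • (Teps T T' e' j * Teps T T' e i)

/-- A pair partition of `[m]`, encoded as a fixed-point-free involution `p`:
the blocks are the sets `{x, p x}`. -/
def IsPairing {m : ℕ} (p : Fin m → Fin m) : Prop :=
  ∀ x, p (p x) = x ∧ p x ≠ x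

/-- A coloring `f : π → {±1}` of the blocks (encoded pointwise, constant on blocks;
`true` stands for the color `1`, `false` for the color `-1`). -/
def IsColoring {m : ℕ} (p : Fin m → Fin m) (f : Fin m → Bool) : Prop :=
  ∀ x, f (p x) = f x

/-- Membership of a colored pair partition in `P^B_{2,ε}`: on each block `{z, w}` with
`z < w` one has `ε(z) = ∗` and `ε(w) = 1` resp. `′` according to the color. -/
def EpsCompat {m : ℕ} (ε : Fin m → Eps) (p : Fin m → Fin m) (f : Fin m → Bool) : Prop :=
  ∀ x, x < p x → ε x = Eps.star ∧ ε (p x) = (if f x then Eps.one else Eps.prime)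

/-- `ker i = π` for the pair partition encoded by the involution `p`. -/
def kerPair {m : ℕ} (i : Fin m → ℕ) (p : Fin m → Fin m) : Prop :=
  ∀ k l, i k = i l ↔ (k = l ∨ p k = l)

/-- The coefficient `Ξ(π_f, i)`: a product of commutation coefficients over crossing pairs
of blocks and over nesting pairs of blocks.  Here `a, b` run over left legs of blocks. -/
noncomputable def Xi (Q : Eps → Eps → ℕ → ℕ → ℝ) {m : ℕ}
    (p : Fin m → Fin m) (f : Fin m → Bool) (i : Fin m → ℕ) : ℝ :=
  (∏ a : Fin m, ∏ b : Fin m,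
    if a < p a ∧ b < p b ∧ a < b ∧ b < p a ∧ p a < p b then
      Q Eps.star (if f a then Eps.one else Eps.prime) (i b) (i (p a)) else 1) *
  (∏ a : Fin m, ∏ b : Fin m,
    if a < p a ∧ b < p b ∧ a < b ∧ p b < p a then
      Q Eps.star Eps.star (i a) (i b) *
        Q Eps.star (if f b then Eps.one else Eps.prime) (i a) (i (p b)) else 1)

/-- The quantity whose limit (as `N → ∞`) is `λ_{π_f}` in condition (C5):
`N^{-n} ∑_{i ∈ [N]^{2n}, ker i = π} Ξ(π_f,i) ∏_{f=1} φ(T^*T) ∏_{f=-1} φ(T^*T')`. -/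
noncomputable def Ysum {A : Type*} [Ring A] [Algebra ℂ A] [StarRing A]
    (φ : A →ₗ[ℂ] ℂ) (T T' : ℕ → A) (Q : Eps → Eps → ℕ → ℕ → ℝ)
    (n N : ℕ) (p : Fin (2 * n) → Fin (2 * n)) (f : Fin (2 * n) → Bool) : ℂ :=
  ((N : ℂ) ^ n)⁻¹ *
    ∑ i ∈ (Fintype.piFinset fun _ : Fin (2 * n) => Finset.Icc 1 N).filter
        (fun i => kerPair i p),
      ((Xi Q p f i : ℝ) : ℂ) *
        (∏ a : Fin (2 * n),
          if a < p a ∧ f a = true then φ (star (T (i a)) * T (i (p a))) else 1) *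
        (∏ a : Fin (2 * n),
          if a < p a ∧ f a = false then φ (star (T (i a)) * T' (i (p a))) else 1)

/-- The normalized sum `S_N^ε = (T_1^ε + ⋯ + T_N^ε)/√N`. -/
noncomputable def SN {A : Type*} [Ring A] [Algebra ℂ A] [StarRing A]
    (T T' : ℕ → A) (e : Eps) (N : ℕ) : A :=
  ((Real.sqrt N : ℂ))⁻¹ • ∑ k ∈ Finset.Icc 1 N, Teps T T' e k

section Aux

namespace Stmt1Aux

variable {A : Type*} [Ring A] [Algebra ℂ A] [StarRing A]

/-- Product of a word of letters. -/
def pA (T T' : ℕ → A) (w : List (Eps × ℕ)) : A :=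
  (w.map fun x => Teps T T' x.1 x.2).prod

@[simp] lemma pA_nil (T T' : ℕ → A) : pA T T' [] = 1 := rfl

@[simp] lemma pA_cons (T T' : ℕ → A) (a : Eps × ℕ) (l : List (Eps × ℕ)) :
    pA T T' (a :: l) = Teps T T' a.1 a.2 * pA T T' l := by
  simp [pA]

/-- The sorting relation on letters: compare the indices. -/
def le2 : Eps × ℕ → Eps × ℕ → Prop := fun x y => x.2 ≤ y.2

instance : DecidableRel (le2) := fun x y => inferInstanceAs (Decidable (x.2 ≤ y.2))
instance : IsTotal (Eps × ℕ) le2 := ⟨fun a b => Nat.le_total _ _⟩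
instance : IsTrans (Eps × ℕ) le2 := ⟨fun _ _ _ => Nat.le_trans⟩

lemma pA_orderedInsert {T T' : ℕ → A} {Q : Eps → Eps → ℕ → ℕ → ℝ} (hC4 : C4 T T' Q)
    (a : Eps × ℕ) (l : List (Eps × ℕ)) :
    ∃ c : ℝ, pA T T' (a :: l) = (c : ℂ) • pA T T' (l.orderedInsert le2 a) := by
  induction l with
  | nil => exact ⟨1, by simp⟩
  | cons b l ih =>
    by_cases h : le2 a b
    · exact ⟨1, by rw [List.orderedInsert_cons_of_le _ _ h]; simp⟩
    · obtain ⟨c, hc⟩ := ih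
      refine ⟨Q a.1 b.1 a.2 b.2 * c, ?_⟩
      have hne : a.2 ≠ b.2 := fun hab => h (le_of_eq hab)
      have hsw := hC4 a.2 b.2 hne a.1 b.1
      have : List.orderedInsert le2 a (b :: l) = b :: List.orderedInsert le2 a l := by
        simp [List.orderedInsert, h]
      rw [this, pA_cons, pA_cons, pA_cons, ← mul_assoc, hsw, smul_mul_assoc, mul_assoc,
        ← pA_cons, hc, mul_smul_comm, smul_smul, Complex.ofReal_mul]

lemma pA_sort {T T' : ℕ → A} {Q : Eps → Eps → ℕ → ℕ → ℝ} (hC4 : C4 T T' Q)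
    (l : List (Eps × ℕ)) :
    ∃ c : ℝ, pA T T' l = (c : ℂ) • pA T T' (l.insertionSort le2) := by
  induction l with
  | nil => exact ⟨1, by simp⟩
  | cons a l ih =>
    obtain ⟨c, hc⟩ := ih
    obtain ⟨c', hc'⟩ := pA_orderedInsert hC4 a (l.insertionSort le2)
    refine ⟨c * c', ?_⟩
    rw [List.insertionSort_cons]
    rw [pA_cons, hc, mul_smul_comm, ← pA_cons, hc', smul_smul, Complex.ofReal_mul]

/-- Group a word into maximal runs of constant index. -/
def grp : List (Eps × ℕ) → List (List (Eps × ℕ))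
  | [] => []
  | a :: l => (a :: l.takeWhile fun x => x.2 == a.2) :: grp (l.dropWhile fun x => x.2 == a.2)
  termination_by l => l.length
  decreasing_by
    simp only [List.length_cons]
    have := (List.dropWhile_sublist (fun x => x.2 == a.2) (l := l)).length_le
    omega

lemma grp_flatten : ∀ l : List (Eps × ℕ), (grp l).flatten = l := by
  intro l
  induction l using grp.induct with
  | case1 => simp [grp]
  | case2 a l ih =>
    rw [grp]
    simp only [List.flatten_cons, ih, List.cons_append, List.takeWhile_append_dropWhile]

lemma grp_groups : ∀ l : List (Eps × ℕ), ∀ g ∈ grp l, g ≠ [] ∧ ∃ m, ∀ x ∈ g, x.2 = m := by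
  intro l
  induction l using grp.induct with
  | case1 => simp [grp]
  | case2 a l ih =>
    rw [grp]
    intro g hg
    rcases List.mem_cons.mp hg with rfl | hg
    · refine ⟨by simp, a.2, ?_⟩
      intro x hx
      rcases List.mem_cons.mp hx with rfl | hx
      · rfl
      · have : (x.2 == a.2) = true := List.mem_takeWhile_imp (p := fun y : Eps × ℕ => y.2 == a.2) hx
        simpa using this
    · exact ih g hg

lemma mem_dropWhile_lt (a : Eps × ℕ) :
    ∀ l : List (Eps × ℕ), l.Pairwise le2 → (∀ b ∈ l, a.2 ≤ b.2) →
      ∀ x ∈ l.dropWhile (fun y => y.2 == a.2), a.2 < x.2 := by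
  intro l
  induction l with
  | nil => simp
  | cons b l ih =>
    intro hp hb x hx
    rw [List.dropWhile_cons] at hx
    by_cases hba : (b.2 == a.2) = true
    · rw [if_pos hba] at hx
      exact ih (List.Pairwise.sublist (List.sublist_cons_self b l) hp)
        (fun b' hb' => hb b' (List.mem_cons_of_mem _ hb')) x hx
    · rw [if_neg hba] at hx
      have hne : b.2 ≠ a.2 := by simpa using hba
      have hab : a.2 < b.2 :=
        lt_of_le_of_ne (hb b List.mem_cons_self) (Ne.symm hne)
      rcases List.mem_cons.mp hx with rfl | hx
      · exact hab
      · exact lt_of_lt_of_le hab ((List.pairwise_cons.mp hp).1 x hx)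

lemma grp_pairwise : ∀ l : List (Eps × ℕ), l.Pairwise le2 →
    (grp l).Pairwise (fun g₁ g₂ => ∀ x₁ ∈ g₁, ∀ x₂ ∈ g₂, x₁.2 ≠ x₂.2) := by
  intro l
  induction l using grp.induct with
  | case1 => intro _; simp [grp]
  | case2 a l ih =>
    intro hp
    rw [grp]
    have hrest : (l.dropWhile fun x => x.2 == a.2).Pairwise le2 :=
      List.Pairwise.sublist
        ((List.dropWhile_sublist _).trans (List.sublist_cons_self a l)) hp
    refine List.Pairwise.cons ?_ (ih hrest)
    intro g hg x₁ hx₁ x₂ hx₂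
    have hx₁2 : x₁.2 = a.2 := by
      rcases List.mem_cons.mp hx₁ with rfl | hx₁
      · rfl
      · have h' : (x₁.2 == a.2) = true := List.mem_takeWhile_imp (p := fun y : Eps × ℕ => y.2 == a.2) hx₁
        simpa using h'
    have hx₂mem : x₂ ∈ l.dropWhile (fun y => y.2 == a.2) := by
      rw [← grp_flatten (l.dropWhile fun y => y.2 == a.2)]
      exact List.mem_flatten.mpr ⟨g, hg, hx₂⟩
    have := mem_dropWhile_lt a l (List.Pairwise.sublist (List.sublist_cons_self a l) hp)
      (fun b hb => (List.pairwise_cons.mp hp).1 b hb) x₂ hx₂mem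
    rw [hx₁2]
    exact Nat.ne_of_lt this

lemma phi_sorted_zero {φ : A →ₗ[ℂ] ℂ} {T T' : ℕ → A}
    (hC1 : C1 φ T T') (hC3 : C3 φ T T')
    {l : List (Eps × ℕ)} (hs : l.Pairwise le2) {x0 : Eps × ℕ} (hx0 : x0 ∈ l)
    (hcnt : l.countP (fun y => y.2 == x0.2) = 1) :
    φ (pA T T' l) = 0 := by
  have hflat := grp_flatten l
  have h3 := hC3 (grp l) (grp_groups l) (grp_pairwise l hs)
  rw [hflat] at h3
  -- find the group containing x0
  obtain ⟨g, hg, hx0g⟩ := List.mem_flatten.mp (by rw [hflat]; exact hx0)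
  obtain ⟨hgne, m, hm⟩ := grp_groups l g hg
  have hmx : m = x0.2 := (hm x0 hx0g).symm
  -- every element of g satisfies the count predicate
  have hcg : g.countP (fun y => y.2 == x0.2) = g.length :=
    List.countP_eq_length.mpr (fun y hy => by
      rw [hm y hy, hmx]; exact beq_self_eq_true _)
  have hsum : l.countP (fun y => y.2 == x0.2)
      = ((grp l).map (List.countP fun y => y.2 == x0.2)).sum := by
    rw [← hflat, List.countP_flatten, hflat]
  have hle : g.countP (fun y => y.2 == x0.2)
      ≤ ((grp l).map (List.countP fun y => y.2 == x0.2)).sum :=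
    List.single_le_sum (fun x _ => Nat.zero_le x) _
      (List.mem_map_of_mem hg)
  have hlen1 : g.length = 1 := by
    have h1 : g.length ≤ 1 := by omega
    have h2 : 1 ≤ g.length := List.length_pos_iff.mpr hgne
    omega
  obtain ⟨x, rfl⟩ := List.length_eq_one_iff.mp hlen1
  have hzero : φ ((([x]).map fun y => Teps T T' y.1 y.2).prod) = 0 := by
    simp [hC1.1 x.2 x.1]
  have : (0 : ℂ) ∈ (grp l).map fun g => φ ((g.map fun y => Teps T T' y.1 y.2).prod) := by
    rw [← hzero]
    exact List.mem_map_of_mem hg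
  rw [pA, h3]
  exact List.prod_eq_zero this

lemma countP_ofFn {α : Type*} (p : α → Bool) : ∀ {n : ℕ} (g : Fin n → α),
    (List.ofFn g).countP p = (Finset.univ.filter fun j => p (g j) = true).card := by
  intro n
  induction n with
  | zero => intro g; simp
  | succ m ih =>
    intro g
    rw [List.ofFn_succ, List.countP_cons, ih]
    rw [Finset.card_filter, Finset.card_filter, Fin.sum_univ_succ]
    by_cases h : p (g 0) = true <;> simp [h] <;> ring

lemma phi_singleton {φ : A →ₗ[ℂ] ℂ} {T T' : ℕ → A} {Q : Eps → Eps → ℕ → ℕ → ℝ}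
    (hC1 : C1 φ T T') (hC3 : C3 φ T T') (hC4 : C4 T T' Q)
    {r : ℕ} (ε : Fin r → Eps) (i : Fin r → ℕ) (k : Fin r)
    (hk : ∀ l, i l = i k → l = k) :
    φ (prodT T T' ε i) = 0 := by
  set w : List (Eps × ℕ) := List.ofFn (fun j => (ε j, i j)) with hw
  have hpw : prodT T T' ε i = pA T T' w := by
    rw [prodT, pA, hw, List.map_ofFn]
    rfl
  obtain ⟨c, hc⟩ := pA_sort hC4 w
  set w' := w.insertionSort le2 with hw'
  have hsorted : w'.Pairwise le2 := List.pairwise_insertionSort le2 w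
  have hperm : List.Perm w' w := List.perm_insertionSort le2 w
  have hx0w : ((ε k, i k) : Eps × ℕ) ∈ w := by
    rw [hw]; exact List.mem_ofFn.mpr ⟨k, rfl⟩
  have hx0 : ((ε k, i k) : Eps × ℕ) ∈ w' := hperm.mem_iff.mpr hx0w
  have hcntw : w.countP (fun y => y.2 == i k) = 1 := by
    rw [hw, countP_ofFn]
    have : (Finset.univ.filter fun j => ((i j == i k) = true)) = {k} := by
      ext j
      simp only [Finset.mem_filter, Finset.mem_univ, true_and, Finset.mem_singleton,
        beq_iff_eq]
      exact ⟨fun h => hk j h, fun h => by rw [h]⟩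
    rw [this, Finset.card_singleton]
  have hcnt : w'.countP (fun y => y.2 == i k) = 1 := by
    rw [hperm.countP_eq]; exact hcntw
  have hz : φ (pA T T' w') = 0 :=
    phi_sorted_zero hC1 hC3 hsorted hx0 hcnt
  rw [hpw, hc, map_smul, hz, smul_zero]

lemma prod_ofFn_smul (c : ℂ) : ∀ {r : ℕ} (X : Fin r → A),
    (List.ofFn fun j => c • X j).prod = c ^ r • (List.ofFn X).prod := by
  intro r
  induction r with
  | zero => intro X; simp
  | succ m ih =>
    intro X
    rw [List.ofFn_succ, List.ofFn_succ, List.prod_cons, List.prod_cons,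
      ih (fun j => X j.succ), smul_mul_assoc, mul_smul_comm, smul_smul, ← pow_succ']

lemma prod_ofFn_sum (s : Finset ℕ) : ∀ {r : ℕ} (g : Fin r → ℕ → A),
    (List.ofFn fun j => ∑ k ∈ s, g j k).prod
      = ∑ i ∈ Fintype.piFinset (fun _ : Fin r => s), (List.ofFn fun j => g j (i j)).prod := by
  intro r
  induction r with
  | zero =>
    intro g
    rw [Fintype.piFinset_of_isEmpty]
    simp
  | succ m ih =>
    intro g
    rw [List.ofFn_succ, List.prod_cons, ih (fun j => g j.succ), Finset.sum_mul_sum,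
      ← Finset.sum_product']
    refine Finset.sum_bij' (fun p _ => Fin.cons p.1 p.2) (fun i _ => (i 0, fun j => i j.succ))
      ?_ ?_ ?_ ?_ ?_
    · rintro ⟨k, i'⟩ hp
      rw [Finset.mem_product] at hp
      rw [Fintype.mem_piFinset]
      intro j
      induction j using Fin.cases with
      | zero => simpa using hp.1
      | succ j' => simpa using Fintype.mem_piFinset.mp hp.2 j'
    · intro i hi
      rw [Finset.mem_product]
      rw [Fintype.mem_piFinset] at hi
      exact ⟨hi 0, Fintype.mem_piFinset.mpr fun j => hi j.succ⟩
    · rintro ⟨k, i'⟩ _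
      simp
    · intro i _
      simp only []
      exact Fin.cons_self_tail i
    · rintro ⟨k, i'⟩ _
      simp only [List.ofFn_succ, List.prod_cons, Fin.cons_zero, Fin.cons_succ]

lemma exists_bound {φ : A →ₗ[ℂ] ℂ} {T T' : ℕ → A} (hC2 : C2 φ T T') (r : ℕ) :
    ∃ Cb : ℝ, 0 ≤ Cb ∧ ∀ (ε : Fin r → Eps) (i : Fin r → ℕ),
      ‖φ (prodT T T' ε i)‖ ≤ Cb := by
  choose ρ hρ0 hρ using hC2 r
  have hne : (Finset.univ : Finset (Fin r → Fin r)).Nonempty := ⟨id, Finset.mem_univ _⟩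
  refine ⟨Finset.univ.sup' hne (fun g : Fin r → Fin r => ρ (Setoid.ker g)), ?_, ?_⟩
  · exact (hρ0 (Setoid.ker (id : Fin r → Fin r))).trans
      (Finset.le_sup' (fun g : Fin r → Fin r => ρ (Setoid.ker g)) (Finset.mem_univ id))
  · intro ε i
    have hR : ∀ k, List.idxOf (i k) (List.ofFn i) < r := by
      intro k
      have : List.idxOf (i k) (List.ofFn i) < (List.ofFn i).length :=
        List.idxOf_lt_length_iff.mpr (List.mem_ofFn.mpr ⟨k, rfl⟩)
      simpa using this
    set g : Fin r → Fin r := fun k => ⟨List.idxOf (i k) (List.ofFn i), hR k⟩ with hg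
    have hkey : ∀ k l, i k = i l ↔ g k = g l := by
      intro k l
      constructor
      · intro h; rw [hg]; simp only [h]
      · intro h
        have h' : List.idxOf (i k) (List.ofFn i) = List.idxOf (i l) (List.ofFn i) := by
          simpa [hg, Fin.mk.injEq] using h
        have h₁ := List.getElem_idxOf
          (List.idxOf_lt_length_iff.mpr (List.mem_ofFn.mpr ⟨k, (rfl : i k = i k)⟩))
        have h₂ := List.getElem_idxOf
          (List.idxOf_lt_length_iff.mpr (List.mem_ofFn.mpr ⟨l, (rfl : i l = i l)⟩))
        rw [← h₁, ← h₂]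
        congr 1
    have hker : Setoid.ker i = Setoid.ker g := by
      apply Setoid.ext
      intro k l
      exact (hkey k l)
    have h1 : ‖φ (prodT T T' ε i)‖ ≤ ρ (Setoid.ker i) :=
      hρ (Setoid.ker i) ε i (fun k l => Iff.rfl)
    rw [hker] at h1
    exact h1.trans (Finset.le_sup' (fun g : Fin r → Fin r => ρ (Setoid.ker g)) (Finset.mem_univ g))

lemma image_card_le {r : ℕ} (i : Fin r → ℕ) (h : ∀ k, ∃ l, l ≠ k ∧ i l = i k) :
    (Finset.univ.image i).card ≤ r / 2 := by
  have h2 : ∀ b ∈ Finset.univ.image i, 2 ≤ (Finset.univ.filter fun k => i k = b).card := by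
    intro b hb
    obtain ⟨k, _, hk⟩ := Finset.mem_image.mp hb
    obtain ⟨l, hlk, hl⟩ := h k
    refine Nat.succ_le_of_lt (Finset.one_lt_card.mpr ⟨l, ?_, k, ?_, hlk⟩)
    · simp [hl, hk]
    · simp [hk]
  have hsum : 2 * (Finset.univ.image i).card ≤ r := by
    calc 2 * (Finset.univ.image i).card
        = ∑ _b ∈ Finset.univ.image i, 2 := by rw [Finset.sum_const, smul_eq_mul, mul_comm]
      _ ≤ ∑ b ∈ Finset.univ.image i, (Finset.univ.filter fun k => i k = b).card :=
          Finset.sum_le_sum h2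
      _ = (Finset.univ : Finset (Fin r)).card := (Finset.card_eq_sum_card_image i _).symm
      _ = r := by simp
  omega

lemma card_small_image_le (r n N : ℕ) (hN : 1 ≤ N) :
    ((Fintype.piFinset fun _ : Fin r => Finset.Icc 1 N).filter
      (fun i => (Finset.univ.image i).card ≤ n)).card ≤ r ^ r * N ^ n := by
  classical
  set t := (Finset.univ : Finset (Fin r → Fin r)) ×ˢ
    (Fintype.piFinset fun _ : Fin n => Finset.Icc 1 N) with ht
  have hcard : t.card = r ^ r * N ^ n := by
    rw [ht, Finset.card_product, Finset.card_univ, Fintype.card_fun,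
      Fintype.card_piFinset]
    simp [Nat.card_Icc]
  rw [← hcard]
  set L : (Fin r → ℕ) → List ℕ := fun i => (Finset.univ.image i).sort (· ≤ ·) with hL
  have hmemL : ∀ (i : Fin r → ℕ) (k : Fin r), i k ∈ L i := by
    intro i k
    rw [hL, Finset.mem_sort]
    exact Finset.mem_image_of_mem i (Finset.mem_univ k)
  have hlenL : ∀ i : Fin r → ℕ, (L i).length = (Finset.univ.image i).card := by
    intro i; rw [hL, Finset.length_sort]
  have hlenr : ∀ i : Fin r → ℕ, (L i).length ≤ r := by
    intro i
    rw [hlenL]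
    exact (Finset.card_image_le).trans (by simp)
  have hidx : ∀ (i : Fin r → ℕ) (k : Fin r), (L i).idxOf (i k) < r := by
    intro i k
    exact lt_of_lt_of_le (List.idxOf_lt_length_iff.mpr (hmemL i k)) (hlenr i)
  apply Finset.card_le_card_of_injOn
    (fun i => ((fun k => (⟨(L i).idxOf (i k), hidx i k⟩ : Fin r)),
      (fun m : Fin n => (L i).getD m 1)))
  · intro i hi
    dsimp only
    rw [Finset.mem_coe, Finset.mem_filter] at hi
    rw [Finset.mem_coe, ht, Finset.mem_product]
    refine ⟨Finset.mem_univ _, Fintype.mem_piFinset.mpr fun m => ?_⟩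
    dsimp only
    by_cases hm : (m : ℕ) < (L i).length
    · rw [List.getD_eq_getElem _ _ hm]
      have hmem : (L i)[(m : ℕ)] ∈ L i := List.getElem_mem _
      have hmem2 : (L i)[(m : ℕ)] ∈ Finset.image i Finset.univ :=
        (Finset.mem_sort (α := ℕ) (· ≤ ·)).mp hmem
      obtain ⟨k, _, hk⟩ := Finset.mem_image.mp hmem2
      rw [← hk]
      exact Fintype.mem_piFinset.mp hi.1 k
    · rw [List.getD_eq_default _ _ (le_of_not_gt hm)]
      simp [hN]
  · intro i hi i' hi' hii
    simp only [Finset.coe_filter, Set.mem_setOf_eq] at hi hi'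
    have h1 := congrArg Prod.fst hii
    have h2 := congrArg Prod.snd hii
    simp only at h1 h2
    funext k
    have hlt : (L i).idxOf (i k) < n := by
      refine lt_of_lt_of_le (List.idxOf_lt_length_iff.mpr (hmemL i k)) ?_
      rw [hlenL]; exact hi.2
    have hlt' : (L i').idxOf (i' k) < n := by
      refine lt_of_lt_of_le (List.idxOf_lt_length_iff.mpr (hmemL i' k)) ?_
      rw [hlenL]; exact hi'.2
    have hval : (L i).idxOf (i k) = (L i').idxOf (i' k) := by
      have := congrFun h1 k
      simpa [Fin.mk.injEq] using this
    have e1 : i k = (L i).getD ((L i).idxOf (i k)) 1 := by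
      rw [List.getD_eq_getElem _ _ (List.idxOf_lt_length_iff.mpr (hmemL i k))]
      exact (List.getElem_idxOf _).symm
    have e2 : i' k = (L i').getD ((L i').idxOf (i' k)) 1 := by
      rw [List.getD_eq_getElem _ _ (List.idxOf_lt_length_iff.mpr (hmemL i' k))]
      exact (List.getElem_idxOf _).symm
    have := congrFun h2 ⟨(L i).idxOf (i k), hlt⟩
    simp only at this
    rw [e1, e2, ← hval]
    exact this

end Stmt1Aux

end Aux

/-- CLT of type B, odd case: under conditions (C1)–(C4), for every odd
`r ≥ 1` and every `ε ∈ {1,∗,′}^r`, the moments `φ(S_N^{ε(1)} ⋯ S_N^{ε(r)})` tend to `0`. -/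
theorem stmt1 {A : Type*} [Ring A] [Algebra ℂ A] [StarRing A]
    (φ : A →ₗ[ℂ] ℂ) (hφ1 : φ 1 = 1) (T T' : ℕ → A) (Q : Eps → Eps → ℕ → ℕ → ℝ)
    (hC1 : C1 φ T T') (hC2 : C2 φ T T') (hC3 : C3 φ T T') (hC4 : C4 T T' Q)
    (r : ℕ) (hr1 : 1 ≤ r) (hr : Odd r) (ε : Fin r → Eps) :
    Tendsto (fun N => φ ((List.ofFn fun j : Fin r => SN T T' (ε j) N).prod))
      atTop (nhds 0) := by
  classical
  obtain ⟨n, hn⟩ := hr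
  have hr2 : r = 2 * n + 1 := by omega
  obtain ⟨Cb, hCb0, hCb⟩ := Stmt1Aux.exists_bound hC2 r
  set D : ℝ := (r : ℝ) ^ r * Cb with hD
  apply squeeze_zero_norm' (a := fun N : ℕ => D * (Real.sqrt N)⁻¹)
  · filter_upwards [eventually_ge_atTop 1] with N hN
    have hsq : 0 < Real.sqrt N := Real.sqrt_pos.mpr (by exact_mod_cast hN)
    have hexp : (List.ofFn fun j : Fin r => SN T T' (ε j) N).prod
        = ((Real.sqrt N : ℂ))⁻¹ ^ r •
          ∑ i ∈ Fintype.piFinset (fun _ : Fin r => Finset.Icc 1 N), prodT T T' ε i := by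
      have h1 : (List.ofFn fun j : Fin r => SN T T' (ε j) N)
          = List.ofFn fun j : Fin r =>
              ((Real.sqrt N : ℂ))⁻¹ • ∑ k ∈ Finset.Icc 1 N, Teps T T' (ε j) k := rfl
      rw [h1, Stmt1Aux.prod_ofFn_smul ((Real.sqrt N : ℂ))⁻¹
        (fun j => ∑ k ∈ Finset.Icc 1 N, Teps T T' (ε j) k),
        Stmt1Aux.prod_ofFn_sum (Finset.Icc 1 N) (fun j k => Teps T T' (ε j) k)]
      rfl
    have hφsum : φ ((List.ofFn fun j : Fin r => SN T T' (ε j) N).prod)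
        = ((Real.sqrt N : ℂ))⁻¹ ^ r *
          ∑ i ∈ (Fintype.piFinset fun _ : Fin r => Finset.Icc 1 N).filter
            (fun i => ∀ k, ∃ l, l ≠ k ∧ i l = i k), φ (prodT T T' ε i) := by
      rw [hexp, map_smul, smul_eq_mul, map_sum]
      congr 1
      refine (Finset.sum_filter_of_ne ?_).symm
      intro i _ hne
      by_contra hns
      push_neg at hns
      obtain ⟨k, hk⟩ := hns
      refine hne (Stmt1Aux.phi_singleton hC1 hC3 hC4 ε i k ?_)
      intro l hl
      by_contra hlk
      exact hk l hlk hl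
    set fs := (Fintype.piFinset fun _ : Fin r => Finset.Icc 1 N).filter
      (fun i => ∀ k, ∃ l, l ≠ k ∧ i l = i k) with hfs
    have hb1 : ‖∑ i ∈ fs, φ (prodT T T' ε i)‖ ≤ (fs.card : ℝ) * Cb := by
      calc ‖∑ i ∈ fs, φ (prodT T T' ε i)‖
          ≤ ∑ i ∈ fs, ‖φ (prodT T T' ε i)‖ := norm_sum_le _ _
        _ ≤ ∑ _i ∈ fs, Cb := Finset.sum_le_sum (fun i _ => by
            exact hCb ε i)
        _ = (fs.card : ℝ) * Cb := by rw [Finset.sum_const, nsmul_eq_mul]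
    have hcard : fs.card ≤ r ^ r * N ^ n := by
      refine le_trans (Finset.card_le_card ?_) (Stmt1Aux.card_small_image_le r n N hN)
      intro i hi
      rw [hfs, Finset.mem_filter] at hi
      rw [Finset.mem_filter]
      refine ⟨hi.1, ?_⟩
      have := Stmt1Aux.image_card_le i hi.2
      omega
    have hbsum : ‖∑ i ∈ fs, φ (prodT T T' ε i)‖ ≤ ((r : ℝ) ^ r * (N : ℝ) ^ n) * Cb := by
      refine hb1.trans (mul_le_mul_of_nonneg_right ?_ hCb0)
      calc (fs.card : ℝ) ≤ ((r ^ r * N ^ n : ℕ) : ℝ) := by exact_mod_cast hcard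
        _ = (r : ℝ) ^ r * (N : ℝ) ^ n := by push_cast; ring
    have hnormc : ‖((Real.sqrt N : ℂ))⁻¹ ^ r‖ = ((Real.sqrt N)⁻¹) ^ r := by
      rw [norm_pow, norm_inv, Complex.norm_real, Real.norm_eq_abs,
        abs_of_nonneg (Real.sqrt_nonneg _)]
    have hu2 : (Real.sqrt N) ^ 2 = (N : ℝ) := Real.sq_sqrt (by positivity)
    have hur : (Real.sqrt N) ^ r = (N : ℝ) ^ n * Real.sqrt N := by
      rw [hr2, pow_succ, pow_mul, hu2]
    have harith : ((Real.sqrt N)⁻¹) ^ r * (((r : ℝ) ^ r * (N : ℝ) ^ n) * Cb)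
        = D * (Real.sqrt N)⁻¹ := by
      have hNn : (0 : ℝ) < (N : ℝ) ^ n := by positivity
      rw [inv_pow, hur, hD]
      field_simp
    calc ‖φ ((List.ofFn fun j : Fin r => SN T T' (ε j) N).prod)‖
        = ‖((Real.sqrt N : ℂ))⁻¹ ^ r‖ * ‖∑ i ∈ fs, φ (prodT T T' ε i)‖ := by
          rw [hφsum, norm_mul]
      _ ≤ ((Real.sqrt N)⁻¹) ^ r * (((r : ℝ) ^ r * (N : ℝ) ^ n) * Cb) := by
          rw [hnormc]
          exact mul_le_mul_of_nonneg_left hbsum (by positivity)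
      _ = D * (Real.sqrt N)⁻¹ := harith
  · have h1 : Tendsto (fun N : ℕ => Real.sqrt N) atTop atTop := by
      rw [tendsto_atTop_atTop]
      intro b
      refine ⟨(Nat.ceil (max b 0)) ^ 2, fun N hN => ?_⟩
      have h2 : ((Nat.ceil (max b 0) : ℝ)) ^ 2 ≤ (N : ℝ) := by
        have : ((Nat.ceil (max b 0)) ^ 2 : ℕ) ≤ N := hN
        exact_mod_cast this
      calc b ≤ max b 0 := le_max_left _ _
        _ ≤ (Nat.ceil (max b 0) : ℝ) := Nat.le_ceil _
        _ = Real.sqrt ((Nat.ceil (max b 0) : ℝ) ^ 2) :=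
            (Real.sqrt_sq (by positivity)).symm
        _ ≤ Real.sqrt N := Real.sqrt_le_sqrt h2
    have h2 := h1.inv_tendsto_atTop
    have h3 := h2.const_mul D
    simpa using h3
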